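/- Let Λ be an abelian group and consider the action of Thompson's group V on the product ∏_{Q₂} Λ over the dyadic rationals Q₂ of [0,1), given by (f^v)(x) = f(v^{-1}x). For ζ ∈ Λ, the map s(ζ) : V → ∏_{Q₂} Λ defined by s(ζ)_v(x) = ζ^{log₂(v'(v^{-1}x))} is a cocycle, i.e., s(ζ)_{vw} = s(ζ)_v · (s(ζ)_w)^v for all v, w ∈ V. -/

import Mathlib

/-! Basic setup: the Cantor space, prefix replacement, Thompson's group `V`,
slopes, dyadic rationals, standard dyadic partitions, locally constant maps,
and the permutation model of the twisted fraction groups `LΓ ⋊ V`. -/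

abbrev Cantor : Type := ℕ → Bool

/-- Concatenation of a finite word with an infinite sequence. -/
def cat (w : List Bool) (x : Cantor) : Cantor :=
  fun n => if n < w.length then w.getD n false else x (n - w.length)

/-- The standard dyadic interval (cylinder) associated to a finite word. -/
def cyl (w : List Bool) : Set Cantor := {x | ∃ y : Cantor, x = cat w y}

/-- Membership in Thompson's group `V`: a homeomorphism of the Cantor space which is
everywhere locally given by prefix replacement. -/
def memV (v : Cantor ≃ₜ Cantor) : Prop :=
  ∀ x : Cantor, ∃ (m w : List Bool) (y : Cantor),
    x = cat m y ∧ ∀ z : Cantor, v (cat m z) = cat w z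

/-- `HasLogSlope v x k` : `k = log₂ v'(x)`, base-2 logarithm of the slope of `v` at `x`. -/
def HasLogSlope (v : Cantor ≃ₜ Cantor) (x : Cantor) (k : ℤ) : Prop :=
  ∃ (m w : List Bool) (y : Cantor),
    x = cat m y ∧ (∀ z : Cantor, v (cat m z) = cat w z) ∧
      k = (m.length : ℤ) - (w.length : ℤ)

open Classical in
noncomputable def logSlope (v : Cantor ≃ₜ Cantor) (x : Cantor) : ℤ :=
  if h : ∃ k : ℤ, HasLogSlope v x k then h.choose else 0

/-- The eventually periodic sequence `c∞ = c·c·c⋯`. -/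
def tailSeq (c : List Bool) : Cantor := fun n => c.getD (n % c.length) false

/-- `x` lies in the tail equivalence class of the word `c`, i.e. `x = y·c∞`. -/
def InTailClass (x : Cantor) (c : List Bool) : Prop :=
  ∃ y : List Bool, x = cat y (tailSeq c)

/-- `x` is eventually periodic (a rational point of the Cantor space). -/
def EvPeriodic (x : Cantor) : Prop :=
  ∃ (y c : List Bool), c ≠ [] ∧ x = cat y (tailSeq c)

/-- A prime word: a nonempty word which is not a proper power of a word. -/
def PrimeWord (c : List Bool) : Prop :=
  c ≠ [] ∧ ∀ (d : List Bool) (k : ℕ), 2 ≤ k → c ≠ (List.replicate k d).flatten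

/-- `conjH φ v = φ ∘ v ∘ φ⁻¹`. -/
def conjH (φ v : Cantor ≃ₜ Cantor) : Cantor ≃ₜ Cantor := φ.symm.trans (v.trans φ)

/-- `φ` normalizes Thompson's group `V` inside `Homeo(𝔠)` : `φ V φ⁻¹ = V`. -/
def NormalizesV (φ : Cantor ≃ₜ Cantor) : Prop :=
  (conjH φ) '' {v | memV v} = {v | memV v}

/-- The copy of the dyadic rationals `Q₂ ⊂ 𝔠` : finitely supported sequences. -/
def InQ2 (x : Cantor) : Prop := ∃ n : ℕ, ∀ m, n ≤ m → x m = false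

def zeroSeq : Cantor := fun _ => false

/-- A standard dyadic partition of the Cantor space. -/
def IsSDP (P : Finset (List Bool)) : Prop :=
  ∀ x : Cantor, ∃! w : List Bool, w ∈ P ∧ x ∈ cyl w

/-- Locally constant map: constant on each piece of some standard dyadic partition. -/
def IsLC {Γ : Type*} (f : Cantor → Γ) : Prop :=
  ∃ P : Finset (List Bool), IsSDP P ∧ ∀ w ∈ P, ∀ y z : Cantor, f (cat w y) = f (cat w z)

/-- `h` agrees on `Q₂` with (the restriction of) a locally constant map. -/
def AgreesOnQ2WithLC {Γ : Type*} (h : Cantor → Γ) : Prop :=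
  ∃ b : Cantor → Γ, IsLC b ∧ ∀ x, InQ2 x → h x = b x

section GroupPart
variable {Γ : Type*} [Group Γ]

/-- `alphaWord α₀ α₁ (m₁⋯m_k) = α_{m_k} ∘ ⋯ ∘ α_{m₁}`. -/
def alphaWord (α₀ α₁ : Γ ≃* Γ) (m : List Bool) : Γ ≃* Γ :=
  m.foldl (fun acc b => acc.trans (if b then α₁ else α₀)) (MulEquiv.refl Γ)

open Classical in
/-- The twisting automorphism `τ_{v,x} = α_{v(I)}⁻¹ ∘ α_I` for a standard dyadic
interval `I` containing `x` and adapted to `v`. -/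
noncomputable def tauEquiv (α₀ α₁ : Γ ≃* Γ) (v : Cantor ≃ₜ Cantor) (x : Cantor) : Γ ≃* Γ :=
  if h : ∃ p : List Bool × List Bool, x ∈ cyl p.1 ∧ ∀ z : Cantor, v (cat p.1 z) = cat p.2 z
  then (alphaWord α₀ α₁ h.choose.1).trans (alphaWord α₀ α₁ h.choose.2).symm
  else MulEquiv.refl Γ

/-- The element `a·v` of the twisted `LΓ ⋊ V`, realized as the permutation
`(x,g) ↦ (v x, a(v x) · τ_{v,x}(g))` of `𝔠 × Γ`. -/
noncomputable def permOf (α₀ α₁ : Γ ≃* Γ) (a : Cantor → Γ) (v : Cantor ≃ₜ Cantor) :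
    Equiv.Perm (Cantor × Γ) where
  toFun p := (v p.1, a (v p.1) * tauEquiv α₀ α₁ v p.1 p.2)
  invFun p := (v.symm p.1, (tauEquiv α₀ α₁ v (v.symm p.1)).symm ((a p.1)⁻¹ * p.2))
  left_inv := by rintro ⟨x, g⟩; simp
  right_inv := by rintro ⟨x, g⟩; simp

end GroupPart

/-- The twisted fraction group `G = LΓ ⋊ V` of the triple `(Γ, α₀, α₁)`,
as a group of permutations of `𝔠 × Γ`. -/
noncomputable def Gsub (Γ : Type*) [Group Γ] (α₀ α₁ : Γ ≃* Γ) :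
    Subgroup (Equiv.Perm (Cantor × Γ)) :=
  Subgroup.closure {p | ∃ a v, IsLC a ∧ memV v ∧ p = permOf α₀ α₁ a v}

/-- The untwisted case `α₀ = α₁ = id`. -/
noncomputable def permOfU {Γ : Type*} [Group Γ] (a : Cantor → Γ) (v : Cantor ≃ₜ Cantor) :=
  permOf (MulEquiv.refl Γ) (MulEquiv.refl Γ) a v

/-- The untwisted fraction group `G = LΓ ⋊ V`. -/
noncomputable def GsubU (Γ : Type*) [Group Γ] := Gsub Γ (MulEquiv.refl Γ) (MulEquiv.refl Γ)

/-- `f ∈ N_{K̄}(G)` : the element `f` of `K̄ = ∏_{Q₂}Γ` normalizes `G = LΓ ⋊ V`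
(untwisted case), i.e. `f·a·(f^v)⁻¹` and `f⁻¹·a·f^v` are locally constant on `Q₂`. -/
def InNormKbar {Γ : Type*} [Group Γ] (f : Cantor → Γ) : Prop :=
  ∀ (a : Cantor → Γ) (v : Cantor ≃ₜ Cantor), IsLC a → memV v →
    AgreesOnQ2WithLC (fun x => f x * a x * (f (v.symm x))⁻¹) ∧
    AgreesOnQ2WithLC (fun x => (f x)⁻¹ * a x * f (v.symm x))

lemma cat_append (a b : List Bool) (z : Cantor) : cat (a ++ b) z = cat a (cat b z) := by
  funext n
  simp only [cat, List.length_append]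
  rcases lt_or_ge n a.length with h | h
  · simp [h, Nat.lt_of_lt_of_le h (Nat.le_add_right _ _), List.getD_append _ _ _ _ h,
      List.getD_eq_getElem, List.getElem_append_left h]
  · rcases lt_or_ge n (a.length + b.length) with h2 | h2
    · have : n - a.length < b.length := by omega
      simp [h2, Nat.not_lt.2 h, this, List.getD, List.getElem?_append_right h,
        List.getElem_append_right h]
    · have : ¬ n - a.length < b.length := by omega
      simp [Nat.not_lt.2 h2, Nat.not_lt.2 h, this]
      congr 1; omega

lemma cat_inj (a : List Bool) {y z : Cantor} (h : cat a y = cat a z) : y = z := by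
  funext n
  have := congrFun h (n + a.length)
  simpa [cat] using this

lemma cat_fun_inj {a b : List Bool} (h : ∀ z, cat a z = cat b z) : a = b := by
  have hlen : a.length = b.length := by
    by_contra hne
    rcases Nat.lt_or_ge a.length b.length with hl | hl
    · have h1 := congrFun (h (fun _ => true)) a.length
      have h2 := congrFun (h (fun _ => false)) a.length
      simp [cat, hl] at h1 h2
      rw [h1] at h2; exact absurd h2 (by simp)
    · have hl' : b.length < a.length := lt_of_le_of_ne hl (Ne.symm hne)
      have h1 := congrFun (h (fun _ => true)) b.length
      have h2 := congrFun (h (fun _ => false)) b.length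
      simp [cat, hl'] at h1 h2
      exact absurd (h1.symm.trans h2) (by simp)
  apply List.ext_getElem hlen
  intro n h1 h2
  have := congrFun (h (fun _ => false)) n
  simpa [cat, h1, h2, hlen, List.getD_eq_getElem] using this

/-- If `x = cat a y = cat b y'` with `|a| ≤ |b|`, then `b = a ++ t` and `y = cat t y'`. -/
lemma prefix_split {a b : List Bool} {y y' : Cantor} (hlen : a.length ≤ b.length)
    (h : cat a y = cat b y') : ∃ t, b = a ++ t ∧ y = cat t y' := by
  refine ⟨b.drop a.length, ?_, ?_⟩
  · apply List.ext_getElem (by simp [Nat.add_sub_cancel' hlen]) -- length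
    intro n h1 h2
    rcases lt_or_ge n a.length with hn | hn
    · have := congrFun h n
      simp [cat, hn, Nat.lt_of_lt_of_le hn hlen, List.getD_eq_getElem, h2] at this
      simp [List.getElem_append, hn, this]
    · simp [List.getElem_append, Nat.not_lt.2 hn, List.getElem_drop]
      congr 1; omega
  · have hb : b = a ++ b.drop a.length := by
      apply List.ext_getElem (by simp [Nat.add_sub_cancel' hlen])
      intro n h1 h2
      rcases lt_or_ge n a.length with hn | hn
      · have := congrFun h n
        simp [cat, hn, Nat.lt_of_lt_of_le hn hlen, List.getD_eq_getElem, h1] at this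
        simp [List.getElem_append, hn, this]
      · simp [List.getElem_append, Nat.not_lt.2 hn]
        congr 1; omega
    rw [hb, cat_append] at h
    exact cat_inj a h

lemma logSlope_unique {v : Cantor ≃ₜ Cantor} {x : Cantor} {k k' : ℤ}
    (h : HasLogSlope v x k) (h' : HasLogSlope v x k') : k = k' := by
  obtain ⟨m, w, y, hx, hv, hk⟩ := h
  obtain ⟨m', w', y', hx', hv', hk'⟩ := h'
  -- wlog m.length ≤ m'.length
  have key : ∀ (m w m' w' : List Bool) (y y' : Cantor), m.length ≤ m'.length →
      cat m y = cat m' y' → (∀ z, v (cat m z) = cat w z) → (∀ z, v (cat m' z) = cat w' z) →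
      (m.length : ℤ) - w.length = (m'.length : ℤ) - w'.length := by
    intro m w m' w' y y' hle hxx hv hv'
    obtain ⟨t, rfl, -⟩ := prefix_split hle hxx
    have : ∀ z, cat (w ++ t) z = cat w' z := by
      intro z
      rw [cat_append, ← hv (cat t z), ← cat_append, hv']
    have := cat_fun_inj this
    subst this
    simp
  rcases le_total m.length m'.length with hle | hle
  · rw [hk, hk']; exact key m w m' w' y y' hle (hx ▸ hx') hv hv'
  · rw [hk, hk']; exact (key m' w' m w y' y hle (hx' ▸ hx) hv' hv).symm

/-- For an abelian group `Λ` and `ζ ∈ Λ`, the map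
`s(ζ)_v(x) = ζ^{log₂ v'(v⁻¹x)}` is a cocycle for the action of `V` on `∏_{Q₂} Λ` :
`s(ζ)_{vw} = s(ζ)_v · (s(ζ)_w)^v`.  (Stated pointwise at `x ∈ Q₂` in terms of the
base-2 logarithms of the slopes; note `vw = w.trans v` as homeomorphisms.) -/
theorem slope_cocycle (Λ : Type*) [CommGroup Λ] (ζ : Λ)
    (v w : Cantor ≃ₜ Cantor) (hv : memV v) (hw : memV w)
    (x : Cantor) (hx : InQ2 x) (k kv kw : ℤ)
    (hk : HasLogSlope (w.trans v) ((w.trans v).symm x) k)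
    (hkv : HasLogSlope v (v.symm x) kv)
    (hkw : HasLogSlope w (w.symm (v.symm x)) kw) :
    ζ ^ k = ζ ^ kv * ζ ^ kw := by
  obtain ⟨m, wv, y, h1, h2, h3⟩ := hkv
  obtain ⟨m', ww, y', h1', h2', h3'⟩ := hkw
  have hsymm : (w.trans v).symm x = w.symm (v.symm x) := rfl
  have hcat : cat m y = cat ww y' := by
    have : w (cat m' y') = cat ww y' := h2' y'
    rw [← h1'] at this
    simp at this
    rw [← h1, ← this]
  have hsum : HasLogSlope (w.trans v) ((w.trans v).symm x) (kv + kw) := by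
    rcases le_total m.length ww.length with hle | hle
    · obtain ⟨t, rfl, -⟩ := prefix_split hle hcat
      refine ⟨m', wv ++ t, y', by rw [hsymm, h1'], fun z => ?_, ?_⟩
      · have : (w.trans v) (cat m' z) = v (cat (m ++ t) z) := by
          simp [Homeomorph.trans_apply, h2' z]
        rw [this, cat_append, h2, ← cat_append]
      · simp at h3 h3' ⊢; omega
    · obtain ⟨t, rfl, hy'⟩ := prefix_split hle hcat.symm
      refine ⟨m' ++ t, wv, y, ?_, fun z => ?_, ?_⟩
      · rw [hsymm, h1', hy', ← cat_append]
      · have hwz : w (cat (m' ++ t) z) = cat (ww ++ t) z := by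
          rw [cat_append, h2' (cat t z), ← cat_append]
        calc (w.trans v) (cat (m' ++ t) z) = v (w (cat (m' ++ t) z)) := rfl
          _ = cat wv z := by rw [hwz, h2]
      · simp at h3 h3' ⊢; omega
  have := logSlope_unique hk hsum
  rw [this, zpow_add]
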